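/- Let A be an invertible N×N complex lower band matrix of order r. Suppose A = U·R where R is an invertible upper triangular matrix and U = Ũ_1·Ũ_2⋯Ũ_{N−r+1} (product in increasing order of indices) with embedded factors built from unitary matrices U_k ∈ ℂ^{(r+1)×(r+1)} (k = 1,…,N−r) and a unitary matrix U_{N−r+1} ∈ ℂ^{r×r}. Partition U_k^* = [[p_U(k), d_U(k)],[a_U(k), q_U(k)]] (blocks of sizes 1×r, 1×1, r×r, r×1) for k = 1,…,N−r. Set x_k = R(k,k) and X_k = R(k, k+1:N). Define q(k) = q_U(k) and a(k) = a_U(k) for k = 1,…,N−r; set P_{N−r+1} = (R(N−r+1:N, N−r+1:N))⁻¹·U_{N−r+1}^*; and for k = N−r,…,1 set p(k) = (1/x_k)·(p_U(k) − X_k·P_{k+1}·a(k)) and P_k = (p(k); P_{k+1}·a(k)) (the row p(k) stacked above P_{k+1}·a(k)). Then p(i), q(i), a(i) (i = 1,…,N−r) together with p(N−r+1) := P_{N−r+1} are lower Green generators of A⁻¹. -/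

import Mathlib

open Matrix

noncomputable section

/-- `A(i,j) = 0` whenever `i - j > r` (1-based; identical in 0-based `Fin` indexing). -/
def IsLowerBand (N r : ℕ) (A : Matrix (Fin N) (Fin N) ℂ) : Prop :=
  ∀ i j : Fin N, (j : ℕ) + r < (i : ℕ) → A i j = 0

/-- `A(i,j) = 0` whenever `j - i > r`. -/
def IsUpperBand (N r : ℕ) (A : Matrix (Fin N) (Fin N) ℂ) : Prop :=
  ∀ i j : Fin N, (i : ℕ) + r < (j : ℕ) → A i j = 0

/-- `rank B(k:N, 1:k+r-1) ≤ r` for every `k = 1, …, N-r` (1-based). -/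
def IsLowerGreen (N r : ℕ) (B : Matrix (Fin N) (Fin N) ℂ) : Prop :=
  ∀ (k : ℕ) (hk1 : 1 ≤ k) (hk2 : k ≤ N - r),
    (B.submatrix
      (fun i : Fin (N - k + 1) => (⟨k - 1 + (i : ℕ), by have := i.isLt; omega⟩ : Fin N))
      (fun j : Fin (k + r - 1) => (⟨(j : ℕ), by have := j.isLt; omega⟩ : Fin N))).rank ≤ r

/-- `rank B(1:k+r-1, k:N) ≤ r` for every `k = 1, …, N-r` (1-based). -/
def IsUpperGreen (N r : ℕ) (B : Matrix (Fin N) (Fin N) ℂ) : Prop :=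
  ∀ (k : ℕ) (hk1 : 1 ≤ k) (hk2 : k ≤ N - r),
    (B.submatrix
      (fun i : Fin (k + r - 1) => (⟨(i : ℕ), by have := i.isLt; omega⟩ : Fin N))
      (fun j : Fin (N - k + 1) => (⟨k - 1 + (j : ℕ), by have := j.isLt; omega⟩ : Fin N))).rank ≤ r

/-- `a^>_{i,s} = a(i-1) a(i-2) ⋯ a(s+1)`, equal to `I_r` when `s ≥ i - 1`. -/
def aGT (r : ℕ) (a : ℕ → Matrix (Fin r) (Fin r) ℂ) (i s : ℕ) :
    Matrix (Fin r) (Fin r) ℂ :=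
  (((List.range' (s + 1) (i - 1 - s)).reverse).map a).prod

/-- `p(i) ∈ ℂ^{1×r}` (i = 1,…,N−r), `pLast = p(N−r+1) ∈ ℂ^{r×r}`, `q(j) ∈ ℂ^{r×1}`,
`a(k) ∈ ℂ^{r×r}` are lower Green generators of the `N×N` matrix `B`:
`B(i,1:r) = p(i)·a^>_{i,0}`, `B(i,r+s-1) = p(i)·a^>_{i,s-1}·q(s-1)` for `2 ≤ s ≤ i ≤ N-r`,
and the analogous identities for the last `r` rows `B(N-r+1:N, ·)` with `pLast`. -/
def IsLowerGreenGenerators (N r : ℕ) (hNr : r < N)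
    (p : ℕ → Matrix (Fin 1) (Fin r) ℂ) (q : ℕ → Matrix (Fin r) (Fin 1) ℂ)
    (a : ℕ → Matrix (Fin r) (Fin r) ℂ) (pLast : Matrix (Fin r) (Fin r) ℂ)
    (B : Matrix (Fin N) (Fin N) ℂ) : Prop :=
  (∀ (i : ℕ) (hi1 : 1 ≤ i) (hi2 : i ≤ N - r) (j : Fin r),
      B ⟨i - 1, by omega⟩ ⟨(j : ℕ), by have := j.isLt; omega⟩ = (p i * aGT r a i 0) 0 j)
  ∧ (∀ (i : ℕ) (hi1 : 1 ≤ i) (hi2 : i ≤ N - r) (s : ℕ) (hs1 : 2 ≤ s) (hs2 : s ≤ i),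
      B ⟨i - 1, by omega⟩ ⟨r + s - 2, by omega⟩
        = (p i * aGT r a i (s - 1) * q (s - 1)) 0 0)
  ∧ (∀ (t : Fin r) (j : Fin r),
      B ⟨N - r + (t : ℕ), by have := t.isLt; omega⟩ ⟨(j : ℕ), by have := j.isLt; omega⟩
        = (pLast * aGT r a (N - r + 1) 0) t j)
  ∧ (∀ (t : Fin r) (s : ℕ) (hs1 : 2 ≤ s) (hs2 : s ≤ N - r + 1),
      B ⟨N - r + (t : ℕ), by have := t.isLt; omega⟩ ⟨r + s - 2, by omega⟩
        = (pLast * aGT r a (N - r + 1) (s - 1) * q (s - 1)) t 0)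

/-- The embedded factor `I_{k-1} ⊕ M ⊕ I_{N-k-r}` (1-based block position `k`),
i.e. `M` occupies (1-based) rows and columns `k, …, k+r` of an `N×N` identity. -/
def embed (N r k : ℕ) (M : Matrix (Fin (r + 1)) (Fin (r + 1)) ℂ) :
    Matrix (Fin N) (Fin N) ℂ :=
  Matrix.of fun i j =>
    if h : k - 1 ≤ (i : ℕ) ∧ (i : ℕ) < k + r ∧ k - 1 ≤ (j : ℕ) ∧ (j : ℕ) < k + r then
      M ⟨(i : ℕ) - (k - 1), by omega⟩ ⟨(j : ℕ) - (k - 1), by omega⟩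
    else if (i : ℕ) = (j : ℕ) then 1 else 0

/-- The embedded last factor `I_{N-r} ⊕ M`. -/
def embedLast (N r : ℕ) (M : Matrix (Fin r) (Fin r) ℂ) : Matrix (Fin N) (Fin N) ℂ :=
  Matrix.of fun i j =>
    if h : N - r ≤ (i : ℕ) ∧ N - r ≤ (j : ℕ) then
      M ⟨(i : ℕ) - (N - r), by have := i.isLt; omega⟩
        ⟨(j : ℕ) - (N - r), by have := j.isLt; omega⟩
    else if (i : ℕ) = (j : ℕ) then 1 else 0

/-- `G̃_1 · G̃_2 ⋯ G̃_{N-r}` (increasing order of indices). -/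
def prodAsc (N r : ℕ) (G : ℕ → Matrix (Fin (r + 1)) (Fin (r + 1)) ℂ) :
    Matrix (Fin N) (Fin N) ℂ :=
  ((List.range' 1 (N - r)).map (fun k => embed N r k (G k))).prod

/-- `G̃_{N-r} · G̃_{N-r-1} ⋯ G̃_1` (decreasing order of indices). -/
def prodDesc (N r : ℕ) (G : ℕ → Matrix (Fin (r + 1)) (Fin (r + 1)) ℂ) :
    Matrix (Fin N) (Fin N) ℂ :=
  (((List.range' 1 (N - r)).reverse).map (fun k => embed N r k (G k))).prod

/-- The `1×r` block `p` of the partition `M = [[p, d], [a, q]]`. -/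
def blkP (r : ℕ) (M : Matrix (Fin (r + 1)) (Fin (r + 1)) ℂ) : Matrix (Fin 1) (Fin r) ℂ :=
  Matrix.of fun _ j => M 0 j.castSucc

/-- The `1×1` block `d` of the partition `M = [[p, d], [a, q]]`. -/
def blkD (r : ℕ) (M : Matrix (Fin (r + 1)) (Fin (r + 1)) ℂ) : ℂ := M 0 (Fin.last r)

/-- The `r×r` block `a` of the partition `M = [[p, d], [a, q]]`. -/
def blkA (r : ℕ) (M : Matrix (Fin (r + 1)) (Fin (r + 1)) ℂ) : Matrix (Fin r) (Fin r) ℂ :=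
  Matrix.of fun i j => M i.succ j.castSucc

/-- The `r×1` block `q` of the partition `M = [[p, d], [a, q]]`. -/
def blkQ (r : ℕ) (M : Matrix (Fin (r + 1)) (Fin (r + 1)) ℂ) : Matrix (Fin r) (Fin 1) ℂ :=
  Matrix.of fun i _ => M i.succ (Fin.last r)

/-- Assemble the `(r+1)×(r+1)` matrix `[[p, d], [a, q]]` from its blocks. -/
def mkBlk (r : ℕ) (p : Matrix (Fin 1) (Fin r) ℂ) (d : ℂ)
    (a : Matrix (Fin r) (Fin r) ℂ) (q : Matrix (Fin r) (Fin 1) ℂ) :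
    Matrix (Fin (r + 1)) (Fin (r + 1)) ℂ :=
  Matrix.of fun i j =>
    if hi : (i : ℕ) = 0 then
      if hj : (j : ℕ) < r then p 0 ⟨(j : ℕ), hj⟩ else d
    else
      if hj : (j : ℕ) < r then a ⟨(i : ℕ) - 1, by have := i.isLt; omega⟩ ⟨(j : ℕ), hj⟩
      else q ⟨(i : ℕ) - 1, by have := i.isLt; omega⟩ 0

/-- The elementary Gauss factor `[[1, 0_{1×r}], [-f, I_r]]`. -/
def elemL (r : ℕ) (f : Matrix (Fin r) (Fin 1) ℂ) :
    Matrix (Fin (r + 1)) (Fin (r + 1)) ℂ :=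
  Matrix.of fun i j =>
    if hi : (i : ℕ) = 0 then (if (j : ℕ) = 0 then 1 else 0)
    else if hj : (j : ℕ) = 0 then -f ⟨(i : ℕ) - 1, by have := i.isLt; omega⟩ 0
    else if (i : ℕ) = (j : ℕ) then 1 else 0

/-- The elementary factor `[[I_r, 0_{r×1}], [-g, 1]]`. -/
def elemLrow (r : ℕ) (g : Matrix (Fin 1) (Fin r) ℂ) :
    Matrix (Fin (r + 1)) (Fin (r + 1)) ℂ :=
  Matrix.of fun i j =>
    if hi : (i : ℕ) < r then
      (if hj : (j : ℕ) < r then (if (i : ℕ) = (j : ℕ) then 1 else 0) else 0)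
    else if hj : (j : ℕ) < r then -g 0 ⟨(j : ℕ), hj⟩ else 1

/-- All leading principal minors are nonzero. -/
def StronglyRegular (N : ℕ) (A : Matrix (Fin N) (Fin N) ℂ) : Prop :=
  ∀ (k : ℕ) (hk : k ≤ N), 1 ≤ k →
    (A.submatrix (Fin.castLE hk) (Fin.castLE hk)).det ≠ 0

section Helpers

variable {N r : ℕ}

lemma sum_window (f : Fin N → ℂ) (a w : ℕ) (haw : a + w ≤ N)
    (hf : ∀ l : Fin N, ((l : ℕ) < a ∨ a + w ≤ (l : ℕ)) → f l = 0) :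
    ∑ l, f l = ∑ m : Fin w, f ⟨a + (m : ℕ), by omega⟩ := by
  classical
  set g : ℕ → ℂ := fun i => if h : i < N then f ⟨i, h⟩ else 0 with hg
  calc ∑ l, f l = ∑ l : Fin N, g (l : ℕ) :=
        Finset.sum_congr rfl fun l _ => by simp [hg]
    _ = ∑ i ∈ Finset.range N, g i := Fin.sum_univ_eq_sum_range g N
    _ = ∑ i ∈ Finset.Ico a (a + w), g i := by
        refine (Finset.sum_subset ?_ ?_).symm
        · intro x hx; simp only [Finset.mem_Ico] at hx
          simp only [Finset.mem_range]; omega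
        · intro x hx hx2
          simp only [Finset.mem_range] at hx
          simp only [Finset.mem_Ico, not_and, not_lt] at hx2
          simp only [hg, dif_pos hx]
          refine hf _ ?_
          by_cases h : a ≤ x
          · exact Or.inr (hx2 h)
          · exact Or.inl (show x < a by omega)
    _ = ∑ i ∈ Finset.range w, g (a + i) := by
        rw [Finset.sum_Ico_eq_sum_range]; simp
    _ = ∑ m : Fin w, f ⟨a + (m : ℕ), by omega⟩ := by
        rw [← Fin.sum_univ_eq_sum_range (fun i => g (a + i)) w]
        exact Finset.sum_congr rfl fun m _ => by
          simp only [hg]; rw [dif_pos (by omega)]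

lemma embed_apply_block (k : ℕ) (M : Matrix (Fin (r + 1)) (Fin (r + 1)) ℂ)
    (i j : Fin N) (h : k - 1 ≤ (i : ℕ) ∧ (i : ℕ) < k + r ∧ k - 1 ≤ (j : ℕ) ∧ (j : ℕ) < k + r) :
    embed N r k M i j = M ⟨(i : ℕ) - (k - 1), by omega⟩ ⟨(j : ℕ) - (k - 1), by omega⟩ := by
  simp only [embed, Matrix.of_apply, dif_pos h]

lemma embed_apply_out (k : ℕ) (M : Matrix (Fin (r + 1)) (Fin (r + 1)) ℂ)
    (i j : Fin N) (h : ¬(k - 1 ≤ (i : ℕ) ∧ (i : ℕ) < k + r ∧ k - 1 ≤ (j : ℕ) ∧ (j : ℕ) < k + r)) :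
    embed N r k M i j = if (i : ℕ) = (j : ℕ) then 1 else 0 := by
  simp only [embed, Matrix.of_apply, dif_neg h]

/-- Left multiplication by an embedded factor, on a row inside the window. -/
lemma embed_mul_apply_in (k : ℕ) (hk : 1 ≤ k) (hkr : k + r ≤ N)
    (M : Matrix (Fin (r + 1)) (Fin (r + 1)) ℂ) (X : Matrix (Fin N) (Fin N) ℂ)
    (i : Fin N) (hi : k - 1 ≤ (i : ℕ) ∧ (i : ℕ) < k + r) (j : Fin N) :
    (embed N r k M * X) i j =
      ∑ m : Fin (r + 1), M ⟨(i : ℕ) - (k - 1), by omega⟩ m * X ⟨k - 1 + (m : ℕ), by omega⟩ j := by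
  rw [Matrix.mul_apply]
  rw [sum_window (fun l => embed N r k M i l * X l j) (k - 1) (r + 1) (by omega)]
  · refine Finset.sum_congr rfl fun m _ => ?_
    rw [embed_apply_block k M i _ ⟨hi.1, hi.2, by first | omega | (simp only [Fin.val_mk]; omega), by first | omega | (simp only [Fin.val_mk]; omega)⟩]
    congr 2
    rw [Fin.ext_iff]; first | omega | (simp only [Fin.val_mk]; omega)
  · intro l hl
    rw [embed_apply_out k M i l (by push_neg; intro _ _ h3; omega)]
    rw [if_neg (by omega), zero_mul]

/-- Left multiplication by an embedded factor, on a row outside the window. -/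
lemma embed_mul_apply_out (k : ℕ)
    (M : Matrix (Fin (r + 1)) (Fin (r + 1)) ℂ) (X : Matrix (Fin N) (Fin N) ℂ)
    (i : Fin N) (hi : ¬(k - 1 ≤ (i : ℕ) ∧ (i : ℕ) < k + r)) (j : Fin N) :
    (embed N r k M * X) i j = X i j := by
  rw [Matrix.mul_apply]
  rw [Finset.sum_eq_single i]
  · rw [embed_apply_out k M i i (by tauto), if_pos rfl, one_mul]
  · intro l _ hl
    rw [embed_apply_out k M i l (by tauto), if_neg (fun h => hl (Fin.ext h.symm)), zero_mul]
  · intro h; exact absurd (Finset.mem_univ i) h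

lemma embedLast_mul_apply_in (hr : r ≤ N) (M : Matrix (Fin r) (Fin r) ℂ)
    (X : Matrix (Fin N) (Fin N) ℂ) (i : Fin N) (hi : N - r ≤ (i : ℕ)) (j : Fin N) :
    (embedLast N r M * X) i j =
      ∑ m : Fin r, M ⟨(i : ℕ) - (N - r), by have := i.isLt; omega⟩ m * X ⟨N - r + (m : ℕ), by omega⟩ j := by
  rw [Matrix.mul_apply]
  rw [sum_window (fun l => embedLast N r M i l * X l j) (N - r) r (by omega)]
  · refine Finset.sum_congr rfl fun m _ => ?_
    have h : N - r ≤ (i : ℕ) ∧ N - r ≤ ((⟨N - r + (m : ℕ), by omega⟩ : Fin N) : ℕ) := ⟨hi, by simp⟩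
    simp only [embedLast, Matrix.of_apply, dif_pos h]
    congr 2
    rw [Fin.ext_iff]; first | omega | (simp only [Fin.val_mk]; omega)
  · intro l hl
    have := i.isLt
    simp only [embedLast, Matrix.of_apply]
    rw [dif_neg (by omega), if_neg (by omega), zero_mul]

lemma embedLast_mul_apply_out (M : Matrix (Fin r) (Fin r) ℂ)
    (X : Matrix (Fin N) (Fin N) ℂ) (i : Fin N) (hi : (i : ℕ) < N - r) (j : Fin N) :
    (embedLast N r M * X) i j = X i j := by
  rw [Matrix.mul_apply]
  rw [Finset.sum_eq_single i]
  · simp only [embedLast, Matrix.of_apply]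
    rw [dif_neg (by omega)]
    simp
  · intro l _ hl
    simp only [embedLast, Matrix.of_apply]
    rw [dif_neg (by omega), if_neg (fun h => hl (Fin.ext h.symm)), zero_mul]
  · intro h; exact absurd (Finset.mem_univ i) h

lemma embed_conjTranspose (k : ℕ) (M : Matrix (Fin (r + 1)) (Fin (r + 1)) ℂ) :
    (embed N r k M)ᴴ = embed N r k Mᴴ := by
  ext i j
  simp only [Matrix.conjTranspose_apply, embed, Matrix.of_apply]
  by_cases h : k - 1 ≤ (j : ℕ) ∧ (j : ℕ) < k + r ∧ k - 1 ≤ (i : ℕ) ∧ (i : ℕ) < k + r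
  · rw [dif_pos h, dif_pos ⟨h.2.2.1, h.2.2.2, h.1, h.2.1⟩]
  · rw [dif_neg h, dif_neg (by tauto)]
    by_cases hij : (i : ℕ) = (j : ℕ)
    · rw [if_pos hij.symm, if_pos hij, star_one]
    · rw [if_neg (fun hh => hij hh.symm), if_neg hij, star_zero]

lemma embedLast_conjTranspose (M : Matrix (Fin r) (Fin r) ℂ) :
    (embedLast N r M)ᴴ = embedLast N r Mᴴ := by
  ext i j
  simp only [Matrix.conjTranspose_apply, embedLast, Matrix.of_apply]
  by_cases h : N - r ≤ (j : ℕ) ∧ N - r ≤ (i : ℕ)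
  · rw [dif_pos h, dif_pos ⟨h.2, h.1⟩]
  · rw [dif_neg h, dif_neg (by tauto)]
    by_cases hij : (i : ℕ) = (j : ℕ)
    · rw [if_pos hij.symm, if_pos hij, star_one]
    · rw [if_neg (fun hh => hij hh.symm), if_neg hij, star_zero]

lemma embed_mul (k : ℕ) (hk : 1 ≤ k) (hkr : k + r ≤ N)
    (M M' : Matrix (Fin (r + 1)) (Fin (r + 1)) ℂ) :
    embed N r k M * embed N r k M' = embed N r k (M * M') := by
  ext i j
  by_cases hi : k - 1 ≤ (i : ℕ) ∧ (i : ℕ) < k + r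
  · rw [embed_mul_apply_in k hk hkr M _ i hi j]
    by_cases hj : k - 1 ≤ (j : ℕ) ∧ (j : ℕ) < k + r
    · rw [embed_apply_block k _ i j ⟨hi.1, hi.2, hj.1, hj.2⟩, Matrix.mul_apply]
      refine Finset.sum_congr rfl fun m _ => ?_
      congr 1
      rw [embed_apply_block k M' _ j ⟨by first | omega | (simp only [Fin.val_mk]; omega), by first | omega | (simp only [Fin.val_mk]; omega), hj.1, hj.2⟩]
      congr 1
      rw [Fin.ext_iff]; first | omega | (simp only [Fin.val_mk]; omega)
    · rw [embed_apply_out k _ i j (by tauto)]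
      rw [if_neg (by omega)]
      refine Finset.sum_eq_zero fun m _ => ?_
      rw [embed_apply_out k M' _ j (by push_neg; intro _ _ h3; omega)]
      rw [if_neg (by first | omega | (simp only [Fin.val_mk]; omega)), mul_zero]
  · rw [embed_mul_apply_out k M _ i hi j]
    rw [embed_apply_out k M' i j (by tauto), embed_apply_out k _ i j (by tauto)]

lemma embed_one (k : ℕ) (hk : 1 ≤ k) :
    embed N r k (1 : Matrix (Fin (r + 1)) (Fin (r + 1)) ℂ) = 1 := by
  ext i j
  rw [Matrix.one_apply]
  by_cases h : k - 1 ≤ (i : ℕ) ∧ (i : ℕ) < k + r ∧ k - 1 ≤ (j : ℕ) ∧ (j : ℕ) < k + r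
  · rw [embed_apply_block k _ i j h, Matrix.one_apply]
    by_cases hij : i = j
    · subst hij; rw [if_pos rfl, if_pos rfl]
    · rw [if_neg hij]
      rw [if_neg (by simp only [ne_eq, Fin.mk.injEq]; simp only [Fin.ext_iff] at hij; omega)]
  · rw [embed_apply_out k _ i j h]
    by_cases hij : i = j
    · subst hij; rw [if_pos rfl, if_pos rfl]
    · rw [if_neg (by simp only [Fin.ext_iff] at hij; omega), if_neg hij]

lemma embedLast_mul (hr : r ≤ N) (M M' : Matrix (Fin r) (Fin r) ℂ) :
    embedLast N r M * embedLast N r M' = embedLast N r (M * M') := by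
  ext i j
  by_cases hi : N - r ≤ (i : ℕ)
  · rw [embedLast_mul_apply_in hr M _ i hi j]
    simp only [embedLast, Matrix.of_apply]
    by_cases hj : N - r ≤ (j : ℕ)
    · rw [dif_pos ⟨hi, hj⟩, Matrix.mul_apply]
      refine Finset.sum_congr rfl fun m _ => ?_
      congr 1
      rw [dif_pos ⟨by simp, hj⟩]
      congr 1
      rw [Fin.ext_iff]; first | omega | (simp only [Fin.val_mk]; omega)
    · rw [dif_neg (by tauto), if_neg (by omega)]
      refine Finset.sum_eq_zero fun m _ => ?_
      rw [dif_neg (by push_neg; intro; omega)]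
      rw [if_neg (by first | omega | (simp only [Fin.val_mk]; omega)), mul_zero]
  · rw [embedLast_mul_apply_out M _ i (by omega) j]
    simp only [embedLast, Matrix.of_apply]
    rw [dif_neg (by tauto), dif_neg (by tauto)]

lemma embedLast_one : embedLast N r (1 : Matrix (Fin r) (Fin r) ℂ) = 1 := by
  ext i j
  rw [Matrix.one_apply]
  simp only [embedLast, Matrix.of_apply]
  by_cases h : N - r ≤ (i : ℕ) ∧ N - r ≤ (j : ℕ)
  · rw [dif_pos h, Matrix.one_apply]
    by_cases hij : i = j
    · subst hij; rw [if_pos rfl, if_pos rfl]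
    · rw [if_neg hij]
      rw [if_neg (by simp only [ne_eq, Fin.mk.injEq]; simp only [Fin.ext_iff] at hij; omega)]
  · rw [dif_neg h]
    by_cases hij : i = j
    · subst hij; rw [if_pos rfl, if_pos rfl]
    · rw [if_neg (by simp only [Fin.ext_iff] at hij; omega), if_neg hij]

end Helpers
section Helpers2

variable {N r : ℕ}

lemma aGT_self (a : ℕ → Matrix (Fin r) (Fin r) ℂ) (i s : ℕ) (h : i ≤ s + 1) :
    aGT r a i s = 1 := by
  have h0 : i - 1 - s = 0 := by omega
  simp [aGT, h0]

lemma aGT_succ (a : ℕ → Matrix (Fin r) (Fin r) ℂ) (i s : ℕ) (h : s + 1 ≤ i) :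
    aGT r a (i + 1) s = a i * aGT r a i s := by
  have h1 : i + 1 - 1 - s = (i - 1 - s) + 1 := by omega
  have h2 : s + 1 + 1 * (i - 1 - s) = i := by omega
  rw [aGT, h1, List.range'_concat, h2, List.reverse_append, List.reverse_singleton,
    List.singleton_append, List.map_cons, List.prod_cons]
  rfl

/-- The Green kernel at level `k`. -/
def Krn (r : ℕ) (a : ℕ → Matrix (Fin r) (Fin r) ℂ) (q : ℕ → Matrix (Fin r) (Fin 1) ℂ)
    (k : ℕ) (m : Fin r) (c : ℕ) : ℂ :=
  if h : c < r then aGT r a k 0 m ⟨c, h⟩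
  else if c + 1 < k + r then (aGT r a k (c - r + 1) * q (c - r + 1)) m 0 else 0

lemma Krn_step (a : ℕ → Matrix (Fin r) (Fin r) ℂ) (q : ℕ → Matrix (Fin r) (Fin 1) ℂ)
    (k : ℕ) (hk : 1 ≤ k) (m : Fin r) (c : ℕ) (hc : c + 1 < k + r) :
    ∑ l : Fin r, a k m l * Krn r a q k l c = Krn r a q (k + 1) m c := by
  by_cases h : c < r
  · simp only [Krn, dif_pos h]
    rw [← Matrix.mul_apply, ← aGT_succ a k 0 (by omega)]
  · have hc2 : c + 1 < k + 1 + r := by omega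
    simp only [Krn, dif_neg h, if_pos hc, if_pos hc2]
    calc ∑ l : Fin r, a k m l * (aGT r a k (c - r + 1) * q (c - r + 1)) l 0
        = (a k * (aGT r a k (c - r + 1) * q (c - r + 1))) m 0 := (Matrix.mul_apply).symm
      _ = ((a k * aGT r a k (c - r + 1)) * q (c - r + 1)) m 0 := by rw [Matrix.mul_assoc]
      _ = (aGT r a (k + 1) (c - r + 1) * q (c - r + 1)) m 0 := by
          rw [← aGT_succ a k (c - r + 1) (by omega)]

lemma Krn_zero (a : ℕ → Matrix (Fin r) (Fin r) ℂ) (q : ℕ → Matrix (Fin r) (Fin 1) ℂ)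
    (k : ℕ) (m : Fin r) (c : ℕ) (h1 : ¬ c < r) (h2 : ¬ c + 1 < k + r) :
    Krn r a q k m c = 0 := by
  simp only [Krn, dif_neg h1, if_neg h2]

def Mdesc (N r : ℕ) (G : ℕ → Matrix (Fin (r + 1)) (Fin (r + 1)) ℂ) (k : ℕ) :
    Matrix (Fin N) (Fin N) ℂ :=
  (((List.range' 1 k).reverse).map (fun j => embed N r j (G j))).prod

lemma Mdesc_zero (G : ℕ → Matrix (Fin (r + 1)) (Fin (r + 1)) ℂ) :
    Mdesc N r G 0 = 1 := by simp [Mdesc]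

lemma Mdesc_succ (G : ℕ → Matrix (Fin (r + 1)) (Fin (r + 1)) ℂ) (k : ℕ) :
    Mdesc N r G (k + 1) = embed N r (k + 1) (G (k + 1)) * Mdesc N r G k := by
  have h2 : 1 + 1 * k = k + 1 := by omega
  rw [Mdesc, List.range'_concat, h2, List.reverse_append, List.reverse_singleton,
    List.singleton_append, List.map_cons, List.prod_cons]
  rfl

lemma prodDesc_eq_Mdesc (G : ℕ → Matrix (Fin (r + 1)) (Fin (r + 1)) ℂ) :
    prodDesc N r G = Mdesc N r G (N - r) := rfl

lemma prod_untouched (G : ℕ → Matrix (Fin (r + 1)) (Fin (r + 1)) ℂ) (l : List ℕ)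
    (X : Matrix (Fin N) (Fin N) ℂ) (i : Fin N) (hi : ∀ j ∈ l, (i : ℕ) + 2 ≤ j) (c : Fin N) :
    ((l.map (fun j => embed N r j (G j))).prod * X) i c = X i c := by
  induction l with
  | nil => simp
  | cons hd tl ih =>
    simp only [List.map_cons, List.prod_cons]
    rw [Matrix.mul_assoc]
    rw [embed_mul_apply_out hd _ _ i (by have := hi hd (by simp); omega) c]
    exact ih (fun j hj => hi j (by simp [hj]))

lemma prodDesc_row (G : ℕ → Matrix (Fin (r + 1)) (Fin (r + 1)) ℂ) (k : ℕ)
    (hk : k ≤ N - r) (i : Fin N) (hi : (i : ℕ) + 1 ≤ k) (c : Fin N) :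
    prodDesc N r G i c = Mdesc N r G k i c := by
  have hsplit : List.range' 1 (N - r) = List.range' 1 k ++ List.range' (1 + k) (N - r - k) := by
    rw [show (1 : ℕ) + k = 1 + 1 * k from by omega, List.range'_append,
      show k + (N - r - k) = N - r from by omega]
  rw [prodDesc, hsplit, List.reverse_append, List.map_append, List.prod_append]
  exact prod_untouched G _ (Mdesc N r G k) i
    (fun j hj => by
      simp only [List.mem_reverse, List.mem_range'_1] at hj
      omega) c

lemma Mdesc_struct (G : ℕ → Matrix (Fin (r + 1)) (Fin (r + 1)) ℂ) (k : ℕ)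
    (hk : k ≤ N - r) (hrN : r < N) :
    (∀ i : Fin N, k + r ≤ (i : ℕ) → ∀ c : Fin N,
        Mdesc N r G k i c = if (i : ℕ) = (c : ℕ) then 1 else 0)
    ∧ (∀ (i : Fin N) (m : Fin r), (i : ℕ) = k + (m : ℕ) → ∀ c : Fin N,
        Mdesc N r G k i c
          = Krn r (fun j => blkA r (G j)) (fun j => blkQ r (G j)) (k + 1) m (c : ℕ)) := by
  induction k with
  | zero =>
    rw [Mdesc_zero]
    constructor
    · intro i _ c
      rw [Matrix.one_apply]
      by_cases h : i = c
      · subst h; rw [if_pos rfl, if_pos rfl]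
      · rw [if_neg h, if_neg (by simpa [Fin.ext_iff] using h)]
    · intro i m him c
      rw [Matrix.one_apply]
      by_cases h : (c : ℕ) < r
      · simp only [Krn, dif_pos h, aGT_self _ 1 0 (by omega), Matrix.one_apply]
        by_cases h2 : (i : ℕ) = (c : ℕ)
        · rw [if_pos (Fin.ext h2)]
          rw [if_pos (by rw [Fin.ext_iff]; simp only [Fin.val_mk]; omega)]
        · rw [if_neg (fun hh => h2 (congrArg Fin.val hh))]
          rw [if_neg (by rw [Fin.ext_iff]; simp only [Fin.val_mk]; omega)]
      · rw [Krn_zero _ _ _ _ _ h (by omega)]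
        rw [if_neg (show ¬ i = c by
          intro hh
          rw [hh] at him
          omega)]
  | succ k ih =>
    obtain ⟨iha, ihb⟩ := ih (by omega)
    have hk1 : 1 ≤ k + 1 := by omega
    have hkrN : k + 1 + r ≤ N := by omega
    rw [Mdesc_succ]
    constructor
    · intro i hi c
      rw [embed_mul_apply_out (k + 1) _ _ i (by omega) c]
      exact iha i (by omega) c
    · intro i m him c
      rw [embed_mul_apply_in (k + 1) hk1 hkrN _ _ i ⟨by omega, by omega⟩ c]
      have hsum : ∀ m' : Fin (r + 1),
          G (k + 1) ⟨(i : ℕ) - (k + 1 - 1), by omega⟩ m'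
              * Mdesc N r G k ⟨k + 1 - 1 + (m' : ℕ), by omega⟩ c
            = G (k + 1) m.succ m' * Mdesc N r G k ⟨k + (m' : ℕ), by omega⟩ c := by
        intro m'
        congr 1 <;> first
          | rfl
          | (congr 1 <;> first
              | rfl
              | (rw [Fin.ext_iff]; simp only [Fin.val_mk, Fin.val_succ]; omega))
      rw [Finset.sum_congr rfl (fun m' _ => hsum m')]
      rw [Fin.sum_univ_castSucc]
      have hlast : Mdesc N r G k ⟨k + ((Fin.last r : Fin (r + 1)) : ℕ), by omega⟩ c
          = if k + r = (c : ℕ) then 1 else 0 := by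
        rw [iha _ (by simp only [Fin.val_mk, Fin.val_last]; omega) c]
        simp only [Fin.val_mk, Fin.val_last]
      have hcast : ∀ m'' : Fin r,
          Mdesc N r G k ⟨k + ((m''.castSucc : Fin (r + 1)) : ℕ), by omega⟩ c
            = Krn r (fun j => blkA r (G j)) (fun j => blkQ r (G j)) (k + 1) m'' (c : ℕ) := by
        intro m''
        exact ihb _ m'' (by simp only [Fin.val_mk, Fin.coe_castSucc]) c
      rw [hlast]
      rw [Finset.sum_congr rfl (fun m'' _ => by rw [hcast m''])]
      -- now : ∑ m'', G (k+1) m.succ m''.castSucc * Krn (k+1) m'' c + G (k+1) m.succ (last r) * δ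
      have hblkA : ∀ m'' : Fin r, G (k + 1) m.succ m''.castSucc = blkA r (G (k + 1)) m m'' :=
        fun m'' => rfl
      have hblkQ : G (k + 1) m.succ (Fin.last r) = blkQ r (G (k + 1)) m 0 := rfl
      by_cases hc : (c : ℕ) + 1 < k + 1 + r
      · rw [if_neg (by omega), mul_zero, add_zero]
        rw [Finset.sum_congr rfl (fun m'' _ => by rw [hblkA m''])]
        have hKS := Krn_step (fun j => blkA r (G j)) (fun j => blkQ r (G j)) (k + 1)
          (by omega) m (c : ℕ) hc
        exact hKS
      · have hzero : ∀ m'' : Fin r,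
            Krn r (fun j => blkA r (G j)) (fun j => blkQ r (G j)) (k + 1) m'' (c : ℕ) = 0 := by
          intro m''
          exact Krn_zero _ _ _ _ _ (by omega) (by omega)
        rw [Finset.sum_congr rfl (fun m'' _ => by rw [hzero m'', mul_zero]),
          Finset.sum_const_zero, zero_add]
        by_cases hc2 : k + r = (c : ℕ)
        · rw [if_pos hc2, mul_one, hblkQ]
          have : ¬ (c : ℕ) < r := by omega
          simp only [Krn, dif_neg this, if_pos (by omega : (c : ℕ) + 1 < k + 1 + 1 + r)]
          rw [show (c : ℕ) - r + 1 = k + 1 from by omega]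
          rw [aGT_self _ (k + 1 + 1) (k + 1) (by omega), Matrix.one_mul]
        · rw [if_neg hc2, mul_zero]
          exact (Krn_zero _ _ _ _ _ (by omega) (by omega)).symm

end Helpers2
section Helpers3

variable {N r : ℕ}

lemma row_congr (B : Matrix (Fin N) (Fin N) ℂ) {x y : ℕ} (hx : x < N) (hy : y < N)
    (h : x = y) (c : Fin N) : B ⟨x, hx⟩ c = B ⟨y, hy⟩ c := by subst h; rfl

lemma entry_congr (B : Matrix (Fin N) (Fin N) ℂ) {x y u v : ℕ} (hx : x < N) (hy : y < N)
    (hu : u < N) (hv : v < N) (h1 : x = y) (h2 : u = v) :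
    B ⟨x, hx⟩ ⟨u, hu⟩ = B ⟨y, hy⟩ ⟨v, hv⟩ := by subst h1; subst h2; rfl

lemma prodAsc_conjTranspose (G : ℕ → Matrix (Fin (r + 1)) (Fin (r + 1)) ℂ) :
    (prodAsc N r G)ᴴ = prodDesc N r (fun k => (G k)ᴴ) := by
  rw [prodAsc, Matrix.conjTranspose_list_prod, prodDesc, List.map_map, ← List.map_reverse]
  exact congrArg List.prod (List.map_congr_left (fun k _ => embed_conjTranspose k (G k)))

lemma embed_mem_unitary (k : ℕ) (hk1 : 1 ≤ k) (hkr : k + r ≤ N)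
    (M : Matrix (Fin (r + 1)) (Fin (r + 1)) ℂ) (hM : M ∈ Matrix.unitaryGroup (Fin (r + 1)) ℂ) :
    embed N r k M ∈ Matrix.unitaryGroup (Fin N) ℂ := by
  rw [Matrix.mem_unitaryGroup_iff]
  rw [Matrix.star_eq_conjTranspose, embed_conjTranspose, ← Matrix.star_eq_conjTranspose,
    embed_mul k hk1 hkr, (Matrix.mem_unitaryGroup_iff.mp hM : M * star M = 1)]
  exact embed_one k hk1

lemma embedLast_mem_unitary (hr : r ≤ N) (M : Matrix (Fin r) (Fin r) ℂ)
    (hM : M ∈ Matrix.unitaryGroup (Fin r) ℂ) :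
    embedLast N r M ∈ Matrix.unitaryGroup (Fin N) ℂ := by
  rw [Matrix.mem_unitaryGroup_iff]
  rw [Matrix.star_eq_conjTranspose, embedLast_conjTranspose, ← Matrix.star_eq_conjTranspose,
    embedLast_mul hr, (Matrix.mem_unitaryGroup_iff.mp hM : M * star M = 1)]
  exact embedLast_one

lemma U_mem_unitary (hrN : r < N) (Uk : ℕ → Matrix (Fin (r + 1)) (Fin (r + 1)) ℂ)
    (Ulast : Matrix (Fin r) (Fin r) ℂ)
    (hUk : ∀ (k : ℕ), 1 ≤ k → k ≤ N - r → Uk k ∈ Matrix.unitaryGroup (Fin (r + 1)) ℂ)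
    (hUlast : Ulast ∈ Matrix.unitaryGroup (Fin r) ℂ) :
    prodAsc N r Uk * embedLast N r Ulast ∈ Matrix.unitaryGroup (Fin N) ℂ := by
  refine mul_mem ?_ (embedLast_mem_unitary (by omega) Ulast hUlast)
  apply Submonoid.list_prod_mem
  intro x hx
  simp only [List.mem_map, List.mem_range'_1] at hx
  obtain ⟨k, hk, rfl⟩ := hx
  exact embed_mem_unitary k (by omega) (by omega) _ (hUk k (by omega) (by omega))

lemma Ustar_row_mid (G : ℕ → Matrix (Fin (r + 1)) (Fin (r + 1)) ℂ)
    (Ul : Matrix (Fin r) (Fin r) ℂ) (hrN : r < N)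
    (i : Fin N) (hi : (i : ℕ) < N - r) (c : Fin N) (hc : (c : ℕ) < (i : ℕ) + r) :
    (embedLast N r Ul * prodDesc N r G) i c
      = ∑ m : Fin r, blkP r (G ((i : ℕ) + 1)) 0 m
          * Krn r (fun j => blkA r (G j)) (fun j => blkQ r (G j)) ((i : ℕ) + 1) m (c : ℕ) := by
  rw [embedLast_mul_apply_out _ _ i hi c]
  rw [prodDesc_row G ((i : ℕ) + 1) (by omega) i (by omega) c]
  rw [Mdesc_succ]
  rw [embed_mul_apply_in ((i : ℕ) + 1) (by omega) (by omega) _ _ i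
    ⟨by omega, by omega⟩ c]
  rw [Fin.sum_univ_castSucc]
  obtain ⟨Sa, Sb⟩ := Mdesc_struct G (i : ℕ) (by omega) hrN
  have hlast : Mdesc N r G (i : ℕ)
      ⟨(i : ℕ) + 1 - 1 + ((Fin.last r : Fin (r + 1)) : ℕ), by have := i.isLt; omega⟩ c = 0 := by
    rw [Sa _ (by simp only [Fin.val_mk, Fin.val_last]; omega) c]
    rw [if_neg (by simp only [Fin.val_mk, Fin.val_last]; omega)]
  rw [hlast, mul_zero, add_zero]
  refine Finset.sum_congr rfl fun m _ => ?_
  rw [Sb _ m (by simp only [Fin.val_mk, Fin.coe_castSucc]; omega) c]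
  congr 1
  have hP : blkP r (G ((i : ℕ) + 1)) 0 m = G ((i : ℕ) + 1) 0 m.castSucc := rfl
  rw [hP]
  congr 1
  rw [Fin.ext_iff]; simp only [Fin.val_mk, Fin.val_zero]; omega

lemma Ustar_row_last (G : ℕ → Matrix (Fin (r + 1)) (Fin (r + 1)) ℂ)
    (Ul : Matrix (Fin r) (Fin r) ℂ) (hrN : r < N)
    (i : Fin N) (hi : N - r ≤ (i : ℕ)) (c : Fin N) :
    (embedLast N r Ul * prodDesc N r G) i c
      = ∑ t' : Fin r, Ul ⟨(i : ℕ) - (N - r), by have := i.isLt; omega⟩ t'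
          * Krn r (fun j => blkA r (G j)) (fun j => blkQ r (G j)) (N - r + 1) t' (c : ℕ) := by
  rw [embedLast_mul_apply_in (by omega) _ _ i hi c]
  refine Finset.sum_congr rfl fun t' _ => ?_
  congr 1
  obtain ⟨Sa, Sb⟩ := Mdesc_struct G (N - r) (le_refl _) hrN
  rw [prodDesc_eq_Mdesc]
  exact Sb _ t' (by simp only [Fin.val_mk]) c

lemma diag_ne_zero {R : Matrix (Fin N) (Fin N) ℂ} (hR : IsUnit R)
    (hRtri : ∀ i j : Fin N, (j : ℕ) < (i : ℕ) → R i j = 0) (i : Fin N) : R i i ≠ 0 := by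
  have hdet : R.det ≠ 0 := ((Matrix.isUnit_iff_isUnit_det R).mp hR).ne_zero
  have htri : R.BlockTriangular id := fun i j h => hRtri i j h
  rw [Matrix.det_of_upperTriangular htri] at hdet
  intro h0
  exact hdet (Finset.prod_eq_zero (Finset.mem_univ i) h0)

end Helpers3
set_option maxHeartbeats 2000000 in
lemma solve_triangular {N r : ℕ} (R22 : Matrix (Fin r) (Fin r) ℂ)
    (htri : ∀ i j : Fin r, (j : ℕ) < (i : ℕ) → R22 i j = 0)
    (hdiag : ∀ i, R22 i i ≠ 0)
    (Y W : Matrix (Fin r) (Fin N) ℂ) (h : R22 * Y = W) : Y = R22⁻¹ * W := by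
  have hdet : IsUnit R22.det := by
    rw [Matrix.det_of_upperTriangular (fun i j hij => htri i j hij)]
    exact isUnit_iff_ne_zero.mpr (Finset.prod_ne_zero_iff.mpr fun i _ => hdiag i)
  rw [← h, ← Matrix.mul_assoc, Matrix.nonsing_inv_mul _ hdet, Matrix.one_mul]


set_option maxHeartbeats 2000000 in
/-- **QR-based inversion of a lower band matrix.** If the invertible lower band matrix `A`
factors as `A = U·R` with `R` invertible upper triangular and `U` a product of embedded
unitary factors, then the data `q(k) = q_U(k)`, `a(k) = a_U(k)` (blocks of `U_k*`),
`P_{N-r+1} = (R(N-r+1:N, N-r+1:N))⁻¹·U_{N-r+1}*` and, recursively downwards,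
`p(k) = (1/x_k)·(p_U(k) − X_k·P_{k+1}·a(k))`, `P_k = (p(k); P_{k+1}·a(k))`,
yield lower Green generators `p(i), q(i), a(i), p(N-r+1) := P_{N-r+1}` of `A⁻¹`. -/
theorem qr_inversion_lowerBand (N r : ℕ) (hr : 0 < r) (hNr : r < N)
    (A : Matrix (Fin N) (Fin N) ℂ) (hA : IsUnit A) (hband : IsLowerBand N r A)
    (Uk : ℕ → Matrix (Fin (r + 1)) (Fin (r + 1)) ℂ) (Ulast : Matrix (Fin r) (Fin r) ℂ)
    (hUk : ∀ (k : ℕ), 1 ≤ k → k ≤ N - r → Uk k ∈ Matrix.unitaryGroup (Fin (r + 1)) ℂ)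
    (hUlast : Ulast ∈ Matrix.unitaryGroup (Fin r) ℂ)
    (R : Matrix (Fin N) (Fin N) ℂ) (hR : IsUnit R)
    (hRtri : ∀ i j : Fin N, (j : ℕ) < (i : ℕ) → R i j = 0)
    (hQR : A = (prodAsc N r Uk * embedLast N r Ulast) * R)
    -- the matrices `P_k` (of size `(N-k+1)×r`), encoded by their rows
    (P : ℕ → ℕ → Fin r → ℂ)
    (hPtop : ∀ (t : Fin r) (j : Fin r),
      P (N - r + 1) (t : ℕ) j
        = (((Matrix.of fun i j : Fin r =>
              R ⟨N - r + (i : ℕ), by have := i.isLt; omega⟩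
                ⟨N - r + (j : ℕ), by have := j.isLt; omega⟩)⁻¹) * Ulastᴴ) t j)
    (p : ℕ → Matrix (Fin 1) (Fin r) ℂ)
    (hp : ∀ (k : ℕ) (hk1 : 1 ≤ k) (hk2 : k ≤ N - r) (j : Fin r),
      p k 0 j = (1 / R ⟨k - 1, by omega⟩ ⟨k - 1, by omega⟩)
        * (blkP r ((Uk k)ᴴ) 0 j
            - ∑ t : Fin (N - k), ∑ l : Fin r,
                R ⟨k - 1, by omega⟩ ⟨k + (t : ℕ), by have := t.isLt; omega⟩
                  * P (k + 1) (t : ℕ) l * blkA r ((Uk k)ᴴ) l j))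
    (hPfirst : ∀ (k : ℕ) (hk1 : 1 ≤ k) (hk2 : k ≤ N - r) (j : Fin r),
      P k 0 j = p k 0 j)
    (hPrec : ∀ (k : ℕ) (hk1 : 1 ≤ k) (hk2 : k ≤ N - r) (t : ℕ) (j : Fin r),
      P k (t + 1) j = ∑ l : Fin r, P (k + 1) t l * blkA r ((Uk k)ᴴ) l j) :
    IsLowerGreenGenerators N r hNr p (fun k => blkQ r ((Uk k)ᴴ))
      (fun k => blkA r ((Uk k)ᴴ))
      (Matrix.of fun i j : Fin r => P (N - r + 1) (i : ℕ) j) A⁻¹ := by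
  classical
  have hUmem := U_mem_unitary hNr Uk Ulast hUk hUlast
  have hAdet : IsUnit A.det := (Matrix.isUnit_iff_isUnit_det A).mp hA
  have hkey : R * A⁻¹ = embedLast N r Ulastᴴ * prodDesc N r (fun k => (Uk k)ᴴ) := by
    have h1 : star (prodAsc N r Uk * embedLast N r Ulast) * A = R := by
      rw [hQR, ← Matrix.mul_assoc, Matrix.mem_unitaryGroup_iff'.mp hUmem, Matrix.one_mul]
    have h2 : R * A⁻¹ = star (prodAsc N r Uk * embedLast N r Ulast) := by
      rw [← h1, Matrix.mul_assoc, Matrix.mul_nonsing_inv A hAdet, Matrix.mul_one]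
    rw [h2, Matrix.star_eq_conjTranspose, Matrix.conjTranspose_mul,
      embedLast_conjTranspose, prodAsc_conjTranspose]
  have keyEntry : ∀ (i c : Fin N), ∑ j, R i j * A⁻¹ j c
      = (embedLast N r Ulastᴴ * prodDesc N r (fun k => (Uk k)ᴴ)) i c := by
    intro i c
    rw [← Matrix.mul_apply, hkey]
  have hdiag : ∀ i : Fin N, R i i ≠ 0 := diag_ne_zero hR hRtri
  -- base case : the last r rows of A⁻¹
  have base : ∀ (t : ℕ) (hrow : N - r + t < N) (c : Fin N),
      A⁻¹ ⟨N - r + t, hrow⟩ c = ∑ l : Fin r, P (N - r + 1) t l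
        * Krn r (fun k => blkA r ((Uk k)ᴴ)) (fun k => blkQ r ((Uk k)ᴴ)) (N - r + 1) l (c : ℕ) := by
    intro t hrow c
    have htr : t < r := by omega
    set KM : Matrix (Fin r) (Fin N) ℂ := Matrix.of fun l c =>
      Krn r (fun k => blkA r ((Uk k)ᴴ)) (fun k => blkQ r ((Uk k)ᴴ)) (N - r + 1) l (c : ℕ) with hKM
    set Y : Matrix (Fin r) (Fin N) ℂ := Matrix.of fun s c =>
      A⁻¹ ⟨N - r + (s : ℕ), by have := s.isLt; omega⟩ c with hYdef
    set R22 : Matrix (Fin r) (Fin r) ℂ := Matrix.of fun i j : Fin r =>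
      R ⟨N - r + (i : ℕ), by have := i.isLt; omega⟩
        ⟨N - r + (j : ℕ), by have := j.isLt; omega⟩ with hR22def
    have heq : R22 * Y = Ulastᴴ * KM := by
      ext s c'
      rw [Matrix.mul_apply]
      have e1 : ∑ j : Fin r, R22 s j * Y j c'
          = ∑ j, R ⟨N - r + (s : ℕ), by have := s.isLt; omega⟩ j * A⁻¹ j c' := by
        rw [sum_window (fun j => R ⟨N - r + (s : ℕ), by have := s.isLt; omega⟩ j * A⁻¹ j c')
          (N - r) r (by omega) (fun l hl => by
            show R ⟨N - r + (s : ℕ), by have := s.isLt; omega⟩ l * A⁻¹ l c' = 0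
            rcases hl with hl | hl
            · rw [hRtri _ _ (by simp only [Fin.val_mk]; omega), zero_mul]
            · exact absurd hl (by have := l.isLt; omega))]
        rfl
      rw [e1, keyEntry _ c',
        Ustar_row_last (fun k => (Uk k)ᴴ) Ulastᴴ hNr _ (by simp only [Fin.val_mk]; omega) c',
        Matrix.mul_apply]
      refine Finset.sum_congr rfl fun t' _ => ?_
      congr 2
      rw [Fin.ext_iff]; simp only [Fin.val_mk]; omega
    have hYsolve : Y = R22⁻¹ * (Ulastᴴ * KM) := by
      refine solve_triangular R22 (fun i j hij => ?_) (fun i => ?_) Y _ heq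
      · exact hRtri _ _ (by simp only [hR22def, Fin.val_mk]; omega)
      · exact hdiag _
    have hA1 : A⁻¹ ⟨N - r + t, hrow⟩ c = Y ⟨t, htr⟩ c := rfl
    rw [hA1, hYsolve, ← Matrix.mul_assoc, Matrix.mul_apply]
    refine Finset.sum_congr rfl fun l _ => ?_
    have hPt : P (N - r + 1) t l = (R22⁻¹ * Ulastᴴ) ⟨t, htr⟩ l := by
      have := hPtop ⟨t, htr⟩ l
      simpa using this
    rw [hPt]
    rfl
  -- the inductive step: from rows ≥ k+1 to rows ≥ k
  have step : ∀ k, 1 ≤ k → k ≤ N - r →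
      (∀ (t : ℕ) (hrow : k + t < N) (c : Fin N), (c : ℕ) + 1 < k + 1 + r →
        A⁻¹ ⟨k + t, hrow⟩ c = ∑ l : Fin r, P (k + 1) t l
          * Krn r (fun j => blkA r ((Uk j)ᴴ)) (fun j => blkQ r ((Uk j)ᴴ)) (k + 1) l (c : ℕ)) →
      ∀ (t : ℕ) (hrow : k - 1 + t < N) (c : Fin N), (c : ℕ) + 1 < k + r →
        A⁻¹ ⟨k - 1 + t, hrow⟩ c = ∑ l : Fin r, P k t l
          * Krn r (fun j => blkA r ((Uk j)ᴴ)) (fun j => blkQ r ((Uk j)ᴴ)) k l (c : ℕ) := by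
    intro k hk1 hk2 ih t hrow c hc
    cases t with
    | succ t' =>
      rw [row_congr A⁻¹ _ (by omega) (by omega : k - 1 + (t' + 1) = k + t') c,
        ih t' (by omega) c (by omega)]
      symm
      calc ∑ l : Fin r, P k (t' + 1) l
            * Krn r (fun j => blkA r ((Uk j)ᴴ)) (fun j => blkQ r ((Uk j)ᴴ)) k l (c : ℕ)
          = ∑ l : Fin r, ∑ m : Fin r, P (k + 1) t' m * blkA r ((Uk k)ᴴ) m l
              * Krn r (fun j => blkA r ((Uk j)ᴴ)) (fun j => blkQ r ((Uk j)ᴴ)) k l (c : ℕ) := by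
            refine Finset.sum_congr rfl fun l _ => ?_
            rw [hPrec k hk1 hk2 t' l, Finset.sum_mul]
        _ = ∑ m : Fin r, ∑ l : Fin r, P (k + 1) t' m * blkA r ((Uk k)ᴴ) m l
              * Krn r (fun j => blkA r ((Uk j)ᴴ)) (fun j => blkQ r ((Uk j)ᴴ)) k l (c : ℕ) :=
            Finset.sum_comm
        _ = ∑ m : Fin r, P (k + 1) t' m
              * Krn r (fun j => blkA r ((Uk j)ᴴ)) (fun j => blkQ r ((Uk j)ᴴ)) (k + 1) m (c : ℕ) := by
            refine Finset.sum_congr rfl fun m _ => ?_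
            rw [← Krn_step (fun j => blkA r ((Uk j)ᴴ)) (fun j => blkQ r ((Uk j)ᴴ)) k hk1 m (c : ℕ)
              (by omega), Finset.mul_sum]
            exact Finset.sum_congr rfl fun l _ => by ring
    | zero =>
      have hkN : k - 1 < N := by omega
      have hwin := keyEntry ⟨k - 1, hkN⟩ c
      rw [sum_window (fun j => R ⟨k - 1, hkN⟩ j * A⁻¹ j c) (k - 1) (N - k + 1) (by omega)
        (fun l hl => by
          show R ⟨k - 1, hkN⟩ l * A⁻¹ l c = 0
          rcases hl with hl | hl
          · rw [hRtri _ _ (by simp only [Fin.val_mk]; omega), zero_mul]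
          · exact absurd hl (by have := l.isLt; omega))] at hwin
      rw [Fin.sum_univ_succ] at hwin
      rw [Ustar_row_mid (fun j => (Uk j)ᴴ) Ulastᴴ hNr ⟨k - 1, hkN⟩
        (by simp only [Fin.val_mk]; omega) c (by simp only [Fin.val_mk]; omega)] at hwin
      simp only [Fin.val_succ, Fin.val_zero, Fin.val_mk, add_zero] at hwin
      rw [show k - 1 + 1 = k from by omega] at hwin
      -- rewrite the A⁻¹ terms in the sum using ih
      have hsum1 : ∀ i : Fin (N - k),
          R ⟨k - 1, hkN⟩ ⟨k - 1 + ((i : ℕ) + 1), by have := i.isLt; omega⟩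
            * A⁻¹ ⟨k - 1 + ((i : ℕ) + 1), by have := i.isLt; omega⟩ c
          = R ⟨k - 1, hkN⟩ ⟨k + (i : ℕ), by have := i.isLt; omega⟩
            * (∑ l : Fin r, P (k + 1) (i : ℕ) l
              * Krn r (fun j => blkA r ((Uk j)ᴴ)) (fun j => blkQ r ((Uk j)ᴴ)) (k + 1) l (c : ℕ)) := by
        intro i
        rw [row_congr A⁻¹ _ (by omega) (by omega : k - 1 + ((i : ℕ) + 1) = k + (i : ℕ)) c,
          ih (i : ℕ) (by omega) c (by omega),
          entry_congr R _ hkN _ (by omega) rfl (by omega : k - 1 + ((i : ℕ) + 1) = k + (i : ℕ))]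
      rw [Finset.sum_congr rfl (fun i _ => hsum1 i)] at hwin
      -- now express the target
      rw [row_congr A⁻¹ _ hkN (by omega : k - 1 + 0 = k - 1) c]
      have hPk : ∀ l : Fin r, P k 0 l = (1 / R ⟨k - 1, hkN⟩ ⟨k - 1, hkN⟩)
          * (blkP r ((Uk k)ᴴ) 0 l
              - ∑ i : Fin (N - k), ∑ m : Fin r,
                  R ⟨k - 1, hkN⟩ ⟨k + (i : ℕ), by have := i.isLt; omega⟩
                    * P (k + 1) (i : ℕ) m * blkA r ((Uk k)ᴴ) m l) := by
        intro l
        rw [hPfirst k hk1 hk2 l, hp k hk1 hk2 l]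
      rw [Finset.sum_congr rfl (fun l _ => by rw [hPk l])]
      have expand : ∑ l : Fin r, (1 / R ⟨k - 1, hkN⟩ ⟨k - 1, hkN⟩)
            * (blkP r ((Uk k)ᴴ) 0 l
              - ∑ i : Fin (N - k), ∑ m : Fin r,
                  R ⟨k - 1, hkN⟩ ⟨k + (i : ℕ), by have := i.isLt; omega⟩
                    * P (k + 1) (i : ℕ) m * blkA r ((Uk k)ᴴ) m l)
            * Krn r (fun j => blkA r ((Uk j)ᴴ)) (fun j => blkQ r ((Uk j)ᴴ)) k l (c : ℕ)
          = (1 / R ⟨k - 1, hkN⟩ ⟨k - 1, hkN⟩)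
            * ((∑ l : Fin r, blkP r ((Uk k)ᴴ) 0 l
                * Krn r (fun j => blkA r ((Uk j)ᴴ)) (fun j => blkQ r ((Uk j)ᴴ)) k l (c : ℕ))
              - ∑ l : Fin r, (∑ i : Fin (N - k), ∑ m : Fin r,
                  R ⟨k - 1, hkN⟩ ⟨k + (i : ℕ), by have := i.isLt; omega⟩
                    * P (k + 1) (i : ℕ) m * blkA r ((Uk k)ᴴ) m l)
                * Krn r (fun j => blkA r ((Uk j)ᴴ)) (fun j => blkQ r ((Uk j)ᴴ)) k l (c : ℕ)) := by
        rw [← Finset.sum_sub_distrib, Finset.mul_sum]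
        exact Finset.sum_congr rfl fun l _ => by ring
      rw [expand]
      have hTK : ∑ l : Fin r, (∑ i : Fin (N - k), ∑ m : Fin r,
            R ⟨k - 1, hkN⟩ ⟨k + (i : ℕ), by have := i.isLt; omega⟩
              * P (k + 1) (i : ℕ) m * blkA r ((Uk k)ᴴ) m l)
            * Krn r (fun j => blkA r ((Uk j)ᴴ)) (fun j => blkQ r ((Uk j)ᴴ)) k l (c : ℕ)
          = ∑ i : Fin (N - k),
              R ⟨k - 1, hkN⟩ ⟨k + (i : ℕ), by have := i.isLt; omega⟩
              * (∑ l : Fin r, P (k + 1) (i : ℕ) l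
                * Krn r (fun j => blkA r ((Uk j)ᴴ)) (fun j => blkQ r ((Uk j)ᴴ)) (k + 1) l (c : ℕ)) := by
        simp only [Finset.sum_mul]
        rw [Finset.sum_comm]
        refine Finset.sum_congr rfl fun i _ => ?_
        rw [Finset.sum_comm, Finset.mul_sum]
        refine Finset.sum_congr rfl fun m _ => ?_
        rw [← Krn_step (fun j => blkA r ((Uk j)ᴴ)) (fun j => blkQ r ((Uk j)ᴴ)) k hk1 m (c : ℕ)
          (by omega), Finset.mul_sum, Finset.mul_sum]
        exact Finset.sum_congr rfl fun l _ => by ring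
      rw [hTK]
      have hxne : R ⟨k - 1, hkN⟩ ⟨k - 1, hkN⟩ ≠ 0 := hdiag _
      have hfin : (∑ m : Fin r, blkP r ((Uk k)ᴴ) 0 m
            * Krn r (fun j => blkA r ((Uk j)ᴴ)) (fun j => blkQ r ((Uk j)ᴴ)) k m (c : ℕ))
          - ∑ i : Fin (N - k),
              R ⟨k - 1, hkN⟩ ⟨k + (i : ℕ), by have := i.isLt; omega⟩
              * (∑ l : Fin r, P (k + 1) (i : ℕ) l
                * Krn r (fun j => blkA r ((Uk j)ᴴ)) (fun j => blkQ r ((Uk j)ᴴ)) (k + 1) l (c : ℕ))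
          = R ⟨k - 1, hkN⟩ ⟨k - 1, hkN⟩ * A⁻¹ ⟨k - 1, hkN⟩ c := by
        rw [← hwin]
        ring
      rw [hfin, one_div, inv_mul_cancel_left₀ hxne]
  -- downward recursion
  have claim : ∀ d k, d + k = N - r + 1 → 1 ≤ k →
      ∀ (t : ℕ) (hrow : k - 1 + t < N) (c : Fin N), (c : ℕ) + 1 < k + r →
        A⁻¹ ⟨k - 1 + t, hrow⟩ c = ∑ l : Fin r, P k t l
          * Krn r (fun j => blkA r ((Uk j)ᴴ)) (fun j => blkQ r ((Uk j)ᴴ)) k l (c : ℕ) := by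
    intro d
    induction d with
    | zero =>
      intro k hdk hk1 t hrow c hc
      have hkk : k = N - r + 1 := by omega
      subst hkk
      rw [row_congr A⁻¹ _ (by omega) (by omega : N - r + 1 - 1 + t = N - r + t) c]
      exact base t (by omega) c
    | succ d ihd =>
      intro k hdk hk1 t hrow c hc
      refine step k hk1 (by omega) ?_ t hrow c hc
      intro t' hrow' c' hc'
      have h2 := ihd (k + 1) (by omega) (by omega) t' (by omega : k + 1 - 1 + t' < N) c' hc'
      rw [← h2]
      exact row_congr A⁻¹ _ _ (by omega) c'
  refine ⟨?_, ?_, ?_, ?_⟩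
  · intro i hi1 hi2 j
    have hC := claim (N - r + 1 - i) i (by omega) hi1 0 (by omega : i - 1 + 0 < N)
      ⟨(j : ℕ), by have := j.isLt; omega⟩ (by simp only [Fin.val_mk]; omega)
    rw [row_congr A⁻¹ (by omega) (by omega) (show i - 1 = i - 1 + 0 by omega) _, hC,
      Matrix.mul_apply]
    refine Finset.sum_congr rfl fun l _ => ?_
    rw [hPfirst i hi1 hi2 l]
    congr 1
    simp only [Krn, Fin.val_mk]
    rw [dif_pos j.isLt]
  · intro i hi1 hi2 s hs1 hs2
    have hC := claim (N - r + 1 - i) i (by omega) hi1 0 (by omega : i - 1 + 0 < N)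
      ⟨r + s - 2, by omega⟩ (by simp only [Fin.val_mk]; omega)
    rw [row_congr A⁻¹ (by omega) (by omega) (show i - 1 = i - 1 + 0 by omega) _, hC,
      Matrix.mul_assoc, Matrix.mul_apply]
    refine Finset.sum_congr rfl fun l _ => ?_
    rw [hPfirst i hi1 hi2 l]
    congr 1
    simp only [Krn, Fin.val_mk]
    rw [dif_neg (by omega), if_pos (by omega),
      show r + s - 2 - r + 1 = s - 1 from by omega]
  · intro t j
    have hB := base (t : ℕ) (by have := t.isLt; omega)
      ⟨(j : ℕ), by have := j.isLt; omega⟩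
    rw [hB, Matrix.mul_apply]
    refine Finset.sum_congr rfl fun l _ => ?_
    congr 1
    simp only [Krn, Fin.val_mk]
    rw [dif_pos j.isLt]
  · intro t s hs1 hs2
    have hB := base (t : ℕ) (by have := t.isLt; omega)
      ⟨r + s - 2, by omega⟩
    rw [hB, Matrix.mul_assoc, Matrix.mul_apply]
    refine Finset.sum_congr rfl fun l _ => ?_
    congr 1
    simp only [Krn, Fin.val_mk]
    rw [dif_neg (by omega), if_pos (by omega),
      show r + s - 2 - r + 1 = s - 1 from by omega]
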